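/- Let $t \ge 1$ and let $a_1 \mid a_2 \mid \cdots \mid a_{4t+1}$ be positive integers with $a_1 = \cdots = a_{2t+2} = 1$, $a_{4t} \mid t$, $a_{4t+1} \mid t^2(4t-1)$, and $\prod_{i=1}^{4t+1} a_i = t^{2t}(4t-1)$. Then $a_{2t+3} = \cdots = a_{4t} = t$ and $a_{4t+1} = t^2(4t-1)$. -/
import Mathlib

private lemma prod_eq_forall_eq (s : Finset ℕ) (f g : ℕ → ℕ)
    (hle : ∀ i ∈ s, f i ≤ g i) (hf : ∀ i ∈ s, 0 < f i)
    (heq : ∏ i ∈ s, f i = ∏ i ∈ s, g i) : ∀ i ∈ s, f i = g i := by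
  classical
  induction s using Finset.induction_on with
  | empty => simp
  | @insert a s ha ih =>
    rw [Finset.prod_insert ha, Finset.prod_insert ha] at heq
    have hle' : ∀ i ∈ s, f i ≤ g i := fun i hi => hle i (Finset.mem_insert_of_mem hi)
    have hf' : ∀ i ∈ s, 0 < f i := fun i hi => hf i (Finset.mem_insert_of_mem hi)
    have hp : ∏ i ∈ s, f i ≤ ∏ i ∈ s, g i := Finset.prod_le_prod (fun i hi => Nat.zero_le _) hle'
    have hfa : 0 < f a := hf a (Finset.mem_insert_self a s)
    have hpf : 0 < ∏ i ∈ s, f i := Finset.prod_pos hf'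
    have h1 : f a * ∏ i ∈ s, f i ≤ g a * ∏ i ∈ s, f i :=
      Nat.mul_le_mul_right _ (hle a (Finset.mem_insert_self a s))
    have h2 : g a * ∏ i ∈ s, f i ≤ g a * ∏ i ∈ s, g i := Nat.mul_le_mul_left _ hp
    have e1 : f a * ∏ i ∈ s, f i = g a * ∏ i ∈ s, f i :=
      le_antisymm h1 (by omega)
    have hga : f a = g a := Nat.eq_of_mul_eq_mul_right hpf e1
    have e2 : ∏ i ∈ s, f i = ∏ i ∈ s, g i := by
      have hga0 : 0 < g a := hga ▸ hfa
      exact Nat.eq_of_mul_eq_mul_left hga0 (by omega)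
    intro i hi
    rcases Finset.mem_insert.1 hi with rfl | hi
    · exact hga
    · exact ih hle' hf' e2 i hi

theorem tournament_invariant_factors (t : ℕ) (ht : 1 ≤ t) (a : ℕ → ℕ)
    (hpos : ∀ i, 1 ≤ i → i ≤ 4 * t + 1 → 0 < a i)
    (hdvd : ∀ i, 1 ≤ i → i ≤ 4 * t → a i ∣ a (i + 1))
    (h1 : ∀ i, 1 ≤ i → i ≤ 2 * t + 2 → a i = 1)
    (h4t : a (4 * t) ∣ t)
    (h4t1 : a (4 * t + 1) ∣ t ^ 2 * (4 * t - 1))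
    (hprod : ∏ i ∈ Finset.Icc 1 (4 * t + 1), a i = t ^ (2 * t) * (4 * t - 1)) :
    (∀ i, 2 * t + 3 ≤ i → i ≤ 4 * t → a i = t) ∧ a (4 * t + 1) = t ^ 2 * (4 * t - 1) := by
  -- divisibility chain
  have hchain : ∀ j, j ≤ 4 * t + 1 → ∀ i, 1 ≤ i → i ≤ j → a i ∣ a j := by
    intro j
    induction j with
    | zero => intro _ i hi hij; omega
    | succ n ihn =>
      intro hn i hi hij
      rcases Nat.lt_or_ge i (n + 1) with h | h
      · have hin : i ≤ n := by omega
        have h1n : 1 ≤ n := by omega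
        exact (ihn (by omega) i hi hin).trans (hdvd n h1n (by omega))
      · have : i = n + 1 := by omega
        subst this; exact dvd_rfl
  -- each a i for i in (2t+2, 4t] divides t
  have hdt : ∀ i, 2 * t + 3 ≤ i → i ≤ 4 * t → a i ∣ t := by
    intro i hi hi4
    exact (by
      have := hchain (4 * t) (by omega) i (by omega) hi4
      exact this.trans h4t)
  -- split the product
  have hsplit : ∏ i ∈ Finset.Icc 1 (4 * t + 1), a i =
      ∏ i ∈ Finset.Ioc (2 * t + 2) (4 * t + 1), a i := by

    rw [show Finset.Icc 1 (4 * t + 1) = Finset.Ioc 0 (4 * t + 1) by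
      ext x; simp [Nat.lt_iff_add_one_le]]
    rw [← Finset.prod_Ioc_consecutive a (Nat.zero_le (2 * t + 2)) (by omega : 2 * t + 2 ≤ 4 * t + 1)]
    have : ∏ i ∈ Finset.Ioc 0 (2 * t + 2), a i = 1 := by
      apply Finset.prod_eq_one
      intro i hi
      rw [Finset.mem_Ioc] at hi
      exact h1 i hi.1 hi.2
    rw [this, one_mul]
  -- target function
  set g : ℕ → ℕ := fun i => if i = 4 * t + 1 then t ^ 2 * (4 * t - 1) else t with hg
  have hgt : ∏ i ∈ Finset.Ioc (2 * t + 2) (4 * t + 1), g i = t ^ (2 * t) * (4 * t - 1) := by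
    rw [Finset.prod_Ioc_succ_top (by omega : 2 * t + 2 ≤ 4 * t)]
    have hconst : ∏ i ∈ Finset.Ioc (2 * t + 2) (4 * t), g i = t ^ (2 * t - 2) := by
      rw [Finset.prod_congr rfl (fun i hi => ?_), Finset.prod_const, Nat.card_Ioc]
      · congr 1; omega
      · rw [Finset.mem_Ioc] at hi
        simp only [hg]
        rw [if_neg (by omega)]
    rw [hconst]
    simp only [hg, if_pos rfl]
    rw [show t ^ (2 * t - 2) * (t ^ 2 * (4 * t - 1)) = t ^ (2 * t - 2) * t ^ 2 * (4 * t - 1) by ring,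
      ← pow_add]
    congr 2
    omega
  have hkey : ∀ i ∈ Finset.Ioc (2 * t + 2) (4 * t + 1), a i = g i := by
    apply prod_eq_forall_eq
    · intro i hi
      rw [Finset.mem_Ioc] at hi
      simp only [hg]
      by_cases h : i = 4 * t + 1
      · rw [if_pos h]
        subst h
        exact Nat.le_of_dvd (Nat.mul_pos (by positivity) (by omega)) h4t1
      · rw [if_neg h]
        exact Nat.le_of_dvd (by omega) (hdt i (by omega) (by omega))
    · intro i hi
      rw [Finset.mem_Ioc] at hi
      exact hpos i (by omega) hi.2
    · rw [← hsplit, hprod, hgt]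
  constructor
  · intro i hi hi4
    have := hkey i (by rw [Finset.mem_Ioc]; omega)
    simpa [hg, show i ≠ 4 * t + 1 by omega] using this
  · have := hkey (4 * t + 1) (by rw [Finset.mem_Ioc]; omega)
    simpa [hg] using this
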